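/- arXiv:2510.10997 — 3 statements merged into one kernel-verified Lean document; each statement's English description precedes it below -/
import Mathlib

section
/- The network formation game (J_N, 2^{D_N}, U) with structure values V (i.e. U_i(g) = Σ_{g'⊆g} V_i(g')) is a potential game if and only if for every nonempty structure g ⊆ D_N, all source nodes assign it the same value: V_i(g) = V_j(g) for all i, j ∈ J_src(g). In that case, writing V_0(g) for this common value, the function Φ(g) = Σ_{g' ⊆ g} V_0(g') is a potential of the game. -/
/-- A dyad on `N` players: an ordered pair of distinct players. -/
abbrev Dyad (N : ℕ) := {p : Fin N × Fin N // p.1 ≠ p.2}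

/-- The network `(s_i, g_{−i})`: `g` with player `i`'s strategy replaced by `s`. -/
def setStrat {N : ℕ} (g : Finset (Dyad N)) (i : Fin N) (s : Finset (Fin N)) :
    Finset (Dyad N) :=
  g.filter (fun e => e.val.1 ≠ i) ∪
    Finset.univ.filter (fun e : Dyad N => e.val.1 = i ∧ e.val.2 ∈ s)

/-- `Φ` is a potential of the game with payoffs `U`. -/
def IsPotential {N : ℕ} (U : Fin N → Finset (Dyad N) → ℝ)
    (Φ : Finset (Dyad N) → ℝ) : Prop :=
  ∀ (i : Fin N) (g : Finset (Dyad N)) (s s' : Finset (Fin N)),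
    U i (setStrat g i s) - U i (setStrat g i s') =
      Φ (setStrat g i s) - Φ (setStrat g i s')

/-- The structure values of `U`, obtained by Möbius inversion. -/
noncomputable def mobiusV {N : ℕ} (U : Fin N → Finset (Dyad N) → ℝ)
    (i : Fin N) (g : Finset (Dyad N)) : ℝ :=
  ∑ g' ∈ g.powerset, (-1 : ℝ) ^ (g \ g').card * U i g'

/-- Player `i` is a source node of the structure `g`: `i ∈ J_src(g)`. -/
def IsSource {N : ℕ} (i : Fin N) (g : Finset (Dyad N)) : Prop :=
  ∃ e ∈ g, e.val.1 = i


section MobAux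
variable {α : Type*} [DecidableEq α]

noncomputable def mob (f : Finset α → ℝ) (t : Finset α) : ℝ :=
  ∑ u ∈ t.powerset, (-1:ℝ)^((t \ u).card) * f u

lemma powerset_insert_disj {a : α} {t : Finset α} (ha : a ∉ t) :
    Disjoint t.powerset (t.powerset.image (insert a)) := by
  rw [Finset.disjoint_left]
  intro x hx hx'
  simp only [Finset.mem_image, Finset.mem_powerset] at hx hx'
  obtain ⟨y, hy, rfl⟩ := hx'
  exact ha (hx (Finset.mem_insert_self a y))

lemma insert_inj_on_powerset {a : α} {t : Finset α} (ha : a ∉ t) :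
    ∀ x ∈ t.powerset, ∀ y ∈ t.powerset, insert a x = insert a y → x = y := by
  intro x hx y hy h
  simp only [Finset.mem_powerset] at hx hy
  have hax : a ∉ x := fun h' => ha (hx h')
  have hay : a ∉ y := fun h' => ha (hy h')
  rw [← Finset.erase_insert hax, h, Finset.erase_insert hay]

lemma mob_insert (f : Finset α → ℝ) {a : α} {t : Finset α} (ha : a ∉ t) :
    mob f (insert a t) = mob (fun u => f (insert a u)) t - mob f t := by
  unfold mob
  rw [Finset.powerset_insert, Finset.sum_union (powerset_insert_disj ha),
    Finset.sum_image (insert_inj_on_powerset ha)]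
  have h1 : ∀ u ∈ t.powerset, (-1:ℝ)^((insert a t \ u).card) * f u
      = -((-1:ℝ)^((t \ u).card) * f u) := by
    intro u hu
    simp only [Finset.mem_powerset] at hu
    have hau : a ∉ u := fun h' => ha (hu h')
    have : insert a t \ u = insert a (t \ u) := by
      ext x; simp [Finset.mem_sdiff, Finset.mem_insert]
      constructor
      · rintro ⟨h1 | h1, h2⟩
        · exact Or.inl h1
        · exact Or.inr ⟨h1, h2⟩
      · rintro (rfl | ⟨h1, h2⟩)
        · exact ⟨Or.inl rfl, hau⟩
        · exact ⟨Or.inr h1, h2⟩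
    rw [this, Finset.card_insert_of_notMem (fun h' => ha (Finset.mem_sdiff.mp h').1)]
    ring
  have h2 : ∀ u ∈ t.powerset, (-1:ℝ)^((insert a t \ insert a u).card) * f (insert a u)
      = (-1:ℝ)^((t \ u).card) * f (insert a u) := by
    intro u hu
    have hset : insert a t \ insert a u = t \ u := by
      ext x; simp only [Finset.mem_sdiff, Finset.mem_insert]
      constructor
      · rintro ⟨rfl | h1, h2⟩
        · exact absurd (Or.inl rfl) h2
        · exact ⟨h1, fun h' => h2 (Or.inr h')⟩
      · rintro ⟨h1, h2⟩
        exact ⟨Or.inr h1, fun h' => h'.elim (fun h'' => ha (h'' ▸ h1)) h2⟩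
    rw [hset]
  rw [Finset.sum_congr rfl h1, Finset.sum_congr rfl h2, Finset.sum_neg_distrib]
  ring

lemma mob_inv (s : Finset α) : ∀ f : Finset α → ℝ, ∑ t ∈ s.powerset, mob f t = f s := by
  induction s using Finset.induction_on with
  | empty => intro f; simp [mob]
  | @insert a s ha ih =>
    intro f
    rw [Finset.powerset_insert, Finset.sum_union (powerset_insert_disj ha),
      Finset.sum_image (insert_inj_on_powerset ha), ih f]
    have h1 : ∀ t ∈ s.powerset, mob f (insert a t)
        = mob (fun u => f (insert a u)) t - mob f t := by
      intro t ht
      exact mob_insert f (fun h' => ha (Finset.mem_powerset.mp ht h'))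
    rw [Finset.sum_congr rfl h1, Finset.sum_sub_distrib, ih (fun u => f (insert a u)), ih f]
    ring

lemma mob_eq_zero {H : Finset α → ℝ} {a : α} {g : Finset α}
    (hH : ∀ t, H (insert a t) = H t) (ha : a ∈ g) : mob H g = 0 := by
  have h := mob_insert H (Finset.notMem_erase a g)
  rw [Finset.insert_erase ha] at h
  simp only [hH] at h
  simpa using h

lemma mob_sub (f k : Finset α → ℝ) (t : Finset α) :
    mob (fun h => f h - k h) t = mob f t - mob k t := by
  unfold mob
  rw [← Finset.sum_sub_distrib]
  exact Finset.sum_congr rfl (fun u _ => by ring)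

lemma sum_sub_sum_congr {β : Type*} [DecidableEq β] {A B : Finset β} {f g : β → ℝ}
    (h1 : ∀ x ∈ A, x ∉ B → f x = g x) (h2 : ∀ x ∈ B, x ∉ A → f x = g x) :
    ∑ x ∈ A, f x - ∑ x ∈ B, f x = ∑ x ∈ A, g x - ∑ x ∈ B, g x := by
  rw [← Finset.sum_inter_add_sum_sdiff A B f, ← Finset.sum_inter_add_sum_sdiff B A f,
    ← Finset.sum_inter_add_sum_sdiff A B g, ← Finset.sum_inter_add_sum_sdiff B A g,
    Finset.inter_comm B A]
  have e1 : ∑ x ∈ A \ B, f x = ∑ x ∈ A \ B, g x :=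
    Finset.sum_congr rfl (fun x hx => h1 x (Finset.mem_sdiff.mp hx).1 (Finset.mem_sdiff.mp hx).2)
  have e2 : ∑ x ∈ B \ A, f x = ∑ x ∈ B \ A, g x :=
    Finset.sum_congr rfl (fun x hx => h2 x (Finset.mem_sdiff.mp hx).1 (Finset.mem_sdiff.mp hx).2)
  rw [e1, e2]; ring

end MobAux

section Game
variable {N : ℕ}

lemma setStrat_empty (g : Finset (Dyad N)) (i : Fin N) :
    setStrat g i ∅ = g.filter (fun e => e.val.1 ≠ i) := by
  simp [setStrat]

lemma setStrat_self (g : Finset (Dyad N)) (i : Fin N) :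
    setStrat g i ((g.filter (fun e => e.val.1 = i)).image (fun e => e.val.2)) = g := by
  ext e
  simp only [setStrat, Finset.mem_union, Finset.mem_filter, Finset.mem_image,
    Finset.mem_univ, true_and]
  constructor
  · rintro (⟨he, _⟩ | ⟨hi, f, ⟨hf, hfi⟩, hfe⟩)
    · exact he
    · have : f = e := Subtype.ext (Prod.ext (hfi.trans hi.symm) hfe)
      exact this ▸ hf
  · intro he
    by_cases hi : e.val.1 = i
    · exact Or.inr ⟨hi, e, ⟨he, hi⟩, rfl⟩
    · exact Or.inl ⟨he, hi⟩

lemma src_of_mem_diff {g : Finset (Dyad N)} {i : Fin N} {s s' : Finset (Fin N)}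
    {e : Dyad N} (h1 : e ∈ setStrat g i s) (h2 : e ∉ setStrat g i s') :
    e.val.1 = i := by
  by_contra hi
  apply h2
  simp only [setStrat, Finset.mem_union, Finset.mem_filter, Finset.mem_univ, true_and] at h1 ⊢
  rcases h1 with ⟨he, _⟩ | ⟨hi', _⟩
  · exact Or.inl ⟨he, hi⟩
  · exact absurd hi' hi

lemma filter_insert_src {i : Fin N} {e : Dyad N} (he : e.val.1 = i) (t : Finset (Dyad N)) :
    (insert e t).filter (fun f => f.val.1 ≠ i) = t.filter (fun f => f.val.1 ≠ i) := by
  rw [Finset.filter_insert, if_neg (by simp [he])]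

end Game

/-- **Proposition 2 (structure-value characterization of potential games).**
The game is a potential game iff for every nonempty structure all source nodes assign it
the same value. In that case, for any `V₀` agreeing with this common value,
`Φ(g) = ∑_{g' ⊆ g} V₀(g')` is a potential of the game. -/
theorem stmt_4 (N : ℕ) (hN : 2 ≤ N) (U : Fin N → Finset (Dyad N) → ℝ) :
    ((∃ Φ : Finset (Dyad N) → ℝ, IsPotential U Φ) ↔
      (∀ g : Finset (Dyad N), g.Nonempty → ∀ i j : Fin N,
        IsSource i g → IsSource j g → mobiusV U i g = mobiusV U j g)) ∧
    ((∀ g : Finset (Dyad N), g.Nonempty → ∀ i j : Fin N,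
        IsSource i g → IsSource j g → mobiusV U i g = mobiusV U j g) →
      ∀ V₀ : Finset (Dyad N) → ℝ,
        (∀ g : Finset (Dyad N), g.Nonempty → ∀ i : Fin N, IsSource i g →
          V₀ g = mobiusV U i g) →
        IsPotential U (fun g => ∑ g' ∈ g.powerset, V₀ g')) := by
  classical
  have mobV_eq : ∀ (i : Fin N) (g : Finset (Dyad N)), mobiusV U i g = mob (U i) g :=
    fun _ _ => rfl
  have part2 : (∀ g : Finset (Dyad N), g.Nonempty → ∀ i j : Fin N,
        IsSource i g → IsSource j g → mobiusV U i g = mobiusV U j g) →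
      ∀ V₀ : Finset (Dyad N) → ℝ,
        (∀ g : Finset (Dyad N), g.Nonempty → ∀ i : Fin N, IsSource i g →
          V₀ g = mobiusV U i g) →
        IsPotential U (fun g => ∑ g' ∈ g.powerset, V₀ g') := by
    intro _hyp V₀ hV₀ i g s s'
    have hU1 : U i (setStrat g i s) = ∑ t ∈ (setStrat g i s).powerset, mob (U i) t :=
      (mob_inv _ (U i)).symm
    have hU2 : U i (setStrat g i s') = ∑ t ∈ (setStrat g i s').powerset, mob (U i) t :=
      (mob_inv _ (U i)).symm
    simp only [hU1, hU2]
    apply sum_sub_sum_congr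
    · intro t ht hnt
      rw [Finset.mem_powerset] at ht
      rw [Finset.mem_powerset] at hnt
      obtain ⟨e, het, hne⟩ := Finset.not_subset.mp hnt
      have hsrc : e.val.1 = i := src_of_mem_diff (ht het) hne
      rw [← mobV_eq, ← hV₀ t ⟨e, het⟩ i ⟨e, het, hsrc⟩]
    · intro t ht hnt
      rw [Finset.mem_powerset] at ht
      rw [Finset.mem_powerset] at hnt
      obtain ⟨e, het, hne⟩ := Finset.not_subset.mp hnt
      have hsrc : e.val.1 = i := src_of_mem_diff (ht het) hne
      rw [← mobV_eq, ← hV₀ t ⟨e, het⟩ i ⟨e, het, hsrc⟩]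
  constructor
  · constructor
    · rintro ⟨Φ, hΦ⟩ g hg i j hi hj
      have key : ∀ k : Fin N, IsSource k g → mobiusV U k g = mob Φ g := by
        rintro k ⟨e, he, hek⟩
        set F : Finset (Dyad N) → ℝ := fun h => U k h - Φ h with hFdef
        have hF : ∀ h : Finset (Dyad N), F h = F (h.filter (fun f => f.val.1 ≠ k)) := by
          intro h
          have h0 := hΦ k h ((h.filter (fun e => e.val.1 = k)).image (fun e => e.val.2)) ∅
          rw [setStrat_self, setStrat_empty] at h0
          simp only [hFdef]
          linarith
        have hins : ∀ t, F (insert e t) = F t := by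
          intro t
          rw [hF (insert e t), filter_insert_src hek, ← hF t]
        have h0 : mob F g = 0 := mob_eq_zero hins he
        rw [hFdef, mob_sub] at h0
        rw [mobV_eq]
        linarith
      rw [key i hi, key j hj]
    · intro hyp
      set V₀ : Finset (Dyad N) → ℝ :=
        fun g => if h : g.Nonempty then mobiusV U h.choose.val.1 g else 0 with hV₀def
      have hV₀ : ∀ g : Finset (Dyad N), g.Nonempty → ∀ i : Fin N, IsSource i g →
          V₀ g = mobiusV U i g := by
        intro g hg i hi
        simp only [hV₀def, dif_pos hg]
        exact hyp g hg _ i ⟨hg.choose, hg.choose_spec, rfl⟩ hi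
      exact ⟨_, part2 hyp V₀ hV₀⟩
  · exact part2
end

section
/- In the simple trade game with N ≥ 2 firms, payoffs U_i(g) = v·|{j : (i,j) ∈ g and (j,i) ∈ g}| − c·|{j : (i,j) ∈ g}| with v, c > 0, the function Φ(g) = (v/2)·|{(i,j) ∈ g : (j,i) ∈ g}| − c·|g| is a potential of the game, and: if v < 2c the empty network is the unique maximizer of Φ over all networks g ⊆ D_N; if v > 2c the complete network D_N is the unique maximizer of Φ. -/
/-- The reversed dyad `(j,i)` of the dyad `(i,j)`. -/
def Dyad.swap {N : ℕ} (e : Dyad N) : Dyad N :=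
  ⟨(e.val.2, e.val.1), Ne.symm e.prop⟩

/-- Payoffs of the simple trade game:
`U_i(g) = v·#{j : ij ∈ g ∧ ji ∈ g} − c·#{j : ij ∈ g}`. -/
noncomputable def tradeU {N : ℕ} (v c : ℝ) (i : Fin N) (g : Finset (Dyad N)) : ℝ :=
  v * (g.filter (fun e => e.val.1 = i ∧ e.swap ∈ g)).card -
    c * (g.filter (fun e => e.val.1 = i)).card

/-- The potential of the simple trade game:
`Φ(g) = (v/2)·#{ij ∈ g : ji ∈ g} − c·|g|`. -/
noncomputable def tradePhi {N : ℕ} (v c : ℝ) (g : Finset (Dyad N)) : ℝ :=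
  (v / 2) * (g.filter (fun e => e.swap ∈ g)).card - c * g.card


lemma Dyad.swap_fst {N : ℕ} (e : Dyad N) : e.swap.val.1 = e.val.2 := rfl
lemma Dyad.swap_snd {N : ℕ} (e : Dyad N) : e.swap.val.2 = e.val.1 := rfl
lemma Dyad.swap_swap {N : ℕ} (e : Dyad N) : e.swap.swap = e := rfl

lemma mem_setStrat {N : ℕ} {g : Finset (Dyad N)} {i : Fin N} {s : Finset (Fin N)}
    {e : Dyad N} : e ∈ setStrat g i s ↔ (e ∈ g ∧ e.val.1 ≠ i) ∨ (e.val.1 = i ∧ e.val.2 ∈ s) := by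
  simp [setStrat, Finset.mem_union, Finset.mem_filter]

lemma filter_ne_setStrat {N : ℕ} (g : Finset (Dyad N)) (i : Fin N) (s : Finset (Fin N)) :
    (setStrat g i s).filter (fun e => e.val.1 ≠ i) = g.filter (fun e => e.val.1 ≠ i) := by
  ext e
  simp only [Finset.mem_filter, mem_setStrat]
  tauto

lemma filter_S3_setStrat {N : ℕ} (g : Finset (Dyad N)) (i : Fin N) (s : Finset (Fin N)) :
    (setStrat g i s).filter
        (fun e => e.val.1 ≠ i ∧ e.val.2 ≠ i ∧ e.swap ∈ setStrat g i s)
      = g.filter (fun e => e.val.1 ≠ i ∧ e.val.2 ≠ i ∧ e.swap ∈ g) := by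
  ext e
  simp only [Finset.mem_filter, mem_setStrat, Dyad.swap_fst, Dyad.swap_snd]
  constructor
  · rintro ⟨he, h1, h2, hsw⟩
    rcases he with ⟨heg, -⟩ | ⟨hi, -⟩
    · refine ⟨heg, h1, h2, ?_⟩
      rcases hsw with ⟨h, -⟩ | ⟨h, -⟩
      · exact h
      · exact absurd h h2
    · exact absurd hi h1
  · rintro ⟨heg, h1, h2, hsw⟩
    exact ⟨Or.inl ⟨heg, h1⟩, h1, h2, Or.inl ⟨hsw, h2⟩⟩

lemma mutual_card {N : ℕ} (i : Fin N) (h : Finset (Dyad N)) :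
    ((h.filter (fun e => e.swap ∈ h)).card : ℝ)
      = 2 * (h.filter (fun e => e.val.1 = i ∧ e.swap ∈ h)).card
        + (h.filter (fun e => e.val.1 ≠ i ∧ e.val.2 ≠ i ∧ e.swap ∈ h)).card := by
  have key : (h.filter (fun e => e.swap ∈ h)).card
      = (h.filter (fun e => e.val.1 = i ∧ e.swap ∈ h)).card
        + (h.filter (fun e => e.val.2 = i ∧ e.swap ∈ h)).card
        + (h.filter (fun e => e.val.1 ≠ i ∧ e.val.2 ≠ i ∧ e.swap ∈ h)).card := by
    have h1 : h.filter (fun e => e.swap ∈ h)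
        = (h.filter (fun e => e.val.1 = i ∧ e.swap ∈ h))
          ∪ (h.filter (fun e => e.val.2 = i ∧ e.swap ∈ h))
          ∪ (h.filter (fun e => e.val.1 ≠ i ∧ e.val.2 ≠ i ∧ e.swap ∈ h)) := by
      ext e
      simp only [Finset.mem_union, Finset.mem_filter]
      by_cases e1 : e.val.1 = i <;> by_cases e2 : e.val.2 = i <;> tauto
    have d1 : Disjoint (h.filter (fun e => e.val.1 = i ∧ e.swap ∈ h))
        (h.filter (fun e => e.val.2 = i ∧ e.swap ∈ h)) := by
      rw [Finset.disjoint_left]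
      intro e he1 he2
      rw [Finset.mem_filter] at he1 he2
      exact e.prop (he1.2.1.trans he2.2.1.symm)
    have d2 : Disjoint ((h.filter (fun e => e.val.1 = i ∧ e.swap ∈ h))
          ∪ (h.filter (fun e => e.val.2 = i ∧ e.swap ∈ h)))
        (h.filter (fun e => e.val.1 ≠ i ∧ e.val.2 ≠ i ∧ e.swap ∈ h)) := by
      rw [Finset.disjoint_left]
      intro e he1 he2
      rw [Finset.mem_union, Finset.mem_filter, Finset.mem_filter] at he1
      rw [Finset.mem_filter] at he2
      tauto
    rw [h1, Finset.card_union_of_disjoint d2, Finset.card_union_of_disjoint d1]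
  have bij : (h.filter (fun e => e.val.2 = i ∧ e.swap ∈ h)).card
      = (h.filter (fun e => e.val.1 = i ∧ e.swap ∈ h)).card := by
    refine Finset.card_bij' (fun e _ => e.swap) (fun e _ => e.swap) ?_ ?_ ?_ ?_
    · intro e he
      simp only [Finset.mem_filter, Dyad.swap_fst, Dyad.swap_swap] at he ⊢
      tauto
    · intro e he
      simp only [Finset.mem_filter, Dyad.swap_snd, Dyad.swap_swap] at he ⊢
      tauto
    · intro e _; exact Dyad.swap_swap e
    · intro e _; exact Dyad.swap_swap e
  rw [key, bij]
  push_cast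
  ring

lemma phi_decomp {N : ℕ} (v c : ℝ) (i : Fin N) (h : Finset (Dyad N)) :
    tradePhi v c h = tradeU v c i h
      + (v / 2) * ((h.filter (fun e => e.val.1 ≠ i ∧ e.val.2 ≠ i ∧ e.swap ∈ h)).card : ℝ)
      - c * ((h.filter (fun e => e.val.1 ≠ i)).card : ℝ) := by
  have hcard : (h.card : ℝ) = ((h.filter (fun e => e.val.1 = i)).card : ℝ)
      + ((h.filter (fun e => ¬ e.val.1 = i)).card : ℝ) := by
    rw [← Finset.card_filter_add_card_filter_not (p := fun e => e.val.1 = i)]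
    push_cast
    ring
  rw [tradePhi, tradeU, mutual_card i h, hcard]
  ring

/-- **The simple trade game (Example 1).** `Φ` is a potential of the trade game; if
`v < 2c` the empty network is the unique maximizer of `Φ`, and if `v > 2c` the complete
network `D_N` is the unique maximizer of `Φ`. -/
theorem stmt_8 (N : ℕ) (hN : 2 ≤ N) (v c : ℝ) (hv : 0 < v) (hc : 0 < c) :
    IsPotential (tradeU (N := N) v c) (tradePhi v c) ∧
    (v < 2 * c → ∀ g : Finset (Dyad N), g ≠ ∅ →
      tradePhi v c g < tradePhi v c (∅ : Finset (Dyad N))) ∧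
    (2 * c < v → ∀ g : Finset (Dyad N), g ≠ Finset.univ →
      tradePhi v c g < tradePhi v c (Finset.univ : Finset (Dyad N))) := by
  refine ⟨?_, ?_, ?_⟩
  · intro i g s s'
    rw [phi_decomp v c i (setStrat g i s), phi_decomp v c i (setStrat g i s'),
      filter_ne_setStrat, filter_S3_setStrat, filter_ne_setStrat, filter_S3_setStrat]
    ring
  · intro hvc g hg
    have hM : ((g.filter (fun e => e.swap ∈ g)).card : ℝ) ≤ (g.card : ℝ) := by
      exact_mod_cast Finset.card_filter_le _ _
    have hg1 : (1 : ℝ) ≤ (g.card : ℝ) := by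
      exact_mod_cast Finset.card_pos.mpr (Finset.nonempty_iff_ne_empty.mpr hg)
    have h0 : tradePhi v c (∅ : Finset (Dyad N)) = 0 := by simp [tradePhi]
    rw [h0, tradePhi]
    nlinarith [hM, hg1, hv.le, hc.le]
  · intro hvc g hg
    have huniv : (Finset.univ : Finset (Dyad N)).filter
        (fun e => e.swap ∈ (Finset.univ : Finset (Dyad N))) = Finset.univ := by
      apply Finset.filter_true_of_mem
      intro e _
      exact Finset.mem_univ _
    have hM : ((g.filter (fun e => e.swap ∈ g)).card : ℝ) ≤ (g.card : ℝ) := by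
      exact_mod_cast Finset.card_filter_le _ _
    have hlt : (g.card : ℝ) < ((Finset.univ : Finset (Dyad N)).card : ℝ) := by
      exact_mod_cast Finset.card_lt_card (Finset.ssubset_univ_iff.mpr hg)
    rw [tradePhi, tradePhi, huniv]
    nlinarith [hM, hlt, hv.le, hc.le]
end

section
/- Let M be a finite set of directed motifs, where each motif m is a finite directed graph with e_m = |edges(m)| ≥ 1, and let a_m ∈ ℝ satisfy a_m > 0 whenever e_m > 1. For measurable h : [0,1]² → [0,1] let t(m,h) = ∫_{[0,1]^{n_m}} ∏_{(i,j)∈m} h(x_i,x_j) dx and H(h) = ∫_{[0,1]²} H(h(x,y)) dx dy where H(p) = −p log p − (1−p) log(1−p) (with H(0)=H(1)=0). Then sup over measurable h : [0,1]² → [0,1] of [ Σ_{m∈M} a_m t(m,h) + H(h) ] equals max_{s∈[0,1]} [ Σ_{m∈M} a_m s^{e_m} + H(s) ], and the supremum is attained by the constant function h ≡ s* for any maximizer s* of the right-hand side. -/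
open MeasureTheory

/-- The unit cube `[0,1]^n` in `Fin n → ℝ`. -/
def unitCube (n : ℕ) : Set (Fin n → ℝ) :=
  Set.univ.pi fun _ => Set.Icc (0 : ℝ) 1

/-- The unit square `[0,1]²` in `ℝ × ℝ`. -/
def unitSquare : Set (ℝ × ℝ) :=
  (Set.Icc (0 : ℝ) 1) ×ˢ (Set.Icc (0 : ℝ) 1)

/-- The Bernoulli entropy `H(p) = −p log p − (1−p) log(1−p)`, extended by `0` at the
endpoints. -/
noncomputable def bernoulliEntropy (p : ℝ) : ℝ :=
  Real.negMulLog p + Real.negMulLog (1 - p)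

/-- The homomorphism density `t(m,h)` of the motif with `n` vertices and edge set `E`
into the graphon `h`. -/
noncomputable def homDensity (n : ℕ) (E : Finset (Fin n × Fin n))
    (h : ℝ → ℝ → ℝ) : ℝ :=
  ∫ x in unitCube n, ∏ e ∈ E, h (x e.1) (x e.2)

/-- The entropy functional `H(h) = ∫_{[0,1]²} H(h(x,y)) dx dy` of a graphon. -/
noncomputable def graphonEntropy (h : ℝ → ℝ → ℝ) : ℝ :=
  ∫ p in unitSquare, bernoulliEntropy (h p.1 p.2)

/-! ### Auxiliary material -/

/-- The uniform probability measure on `[0,1]`. -/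
noncomputable def nuIcc : Measure ℝ := volume.restrict (Set.Icc 0 1)

instance : IsProbabilityMeasure nuIcc :=
  ⟨by rw [nuIcc, Measure.restrict_apply MeasurableSet.univ, Set.univ_inter, Real.volume_Icc]
      norm_num⟩

lemma cube_eq (n : ℕ) :
    (volume : Measure (Fin n → ℝ)).restrict (unitCube n) = Measure.pi fun _ => nuIcc := by
  refine (Measure.pi_eq fun s hs => ?_).symm
  rw [Measure.restrict_apply (MeasurableSet.univ_pi hs), unitCube, ← Set.pi_inter_distrib,
    volume_pi_pi]
  refine Finset.prod_congr rfl fun i _ => ?_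
  rw [nuIcc, Measure.restrict_apply (hs i)]

lemma square_eq : (volume : Measure (ℝ × ℝ)).restrict unitSquare = nuIcc.prod nuIcc := by
  rw [unitSquare, Measure.volume_eq_prod, ← Measure.prod_restrict]
  rfl

lemma map_pair {n : ℕ} {i j : Fin n} (hij : i ≠ j) :
    Measure.map (fun x : Fin n → ℝ => (x i, x j)) (Measure.pi fun _ => nuIcc)
      = nuIcc.prod nuIcc := by
  classical
  refine (Measure.prod_eq fun s t hs ht => ?_).symm
  rw [Measure.map_apply ((measurable_pi_apply i).prodMk (measurable_pi_apply j)) (hs.prod ht)]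
  have hpre : (fun x : Fin n → ℝ => (x i, x j)) ⁻¹' (s ×ˢ t)
      = Set.pi Set.univ (fun k => if k = i then s else if k = j then t else Set.univ) := by
    ext x
    simp only [Set.mem_preimage, Set.mem_prod, Set.mem_pi, Set.mem_univ, true_implies]
    constructor
    · rintro ⟨h1, h2⟩ k
      by_cases hk : k = i
      · subst hk; simp [h1]
      · by_cases hk' : k = j
        · subst hk'; simp [hk, h2]
        · simp [hk, hk']
    · intro H
      refine ⟨?_, ?_⟩
      · have := H i; simpa using this
      · have := H j; simpa [hij.symm] using this
  rw [hpre, Measure.pi_pi]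
  calc (∏ k, nuIcc (if k = i then s else if k = j then t else Set.univ))
      = nuIcc s * ∏ k ∈ Finset.univ.erase i,
          nuIcc (if k = i then s else if k = j then t else Set.univ) := by
        rw [← Finset.mul_prod_erase Finset.univ _ (Finset.mem_univ i), if_pos rfl]
    _ = nuIcc s * (nuIcc t * ∏ k ∈ (Finset.univ.erase i).erase j,
          nuIcc (if k = i then s else if k = j then t else Set.univ)) := by
        rw [← Finset.mul_prod_erase _ _
          (Finset.mem_erase.2 ⟨hij.symm, Finset.mem_univ j⟩), if_neg hij.symm, if_pos rfl]
    _ = nuIcc s * nuIcc t := by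
        rw [Finset.prod_eq_one, mul_one]
        intro k hk
        rcases Finset.mem_erase.1 hk with ⟨hkj, hk'⟩
        rcases Finset.mem_erase.1 hk' with ⟨hki, -⟩
        rw [if_neg hki, if_neg hkj, measure_univ]

lemma integral_coord_pair {n : ℕ} {i j : Fin n} (hij : i ≠ j) {g : ℝ × ℝ → ℝ}
    (hg : Measurable g) :
    ∫ x, g (x i, x j) ∂(Measure.pi fun _ : Fin n => nuIcc) = ∫ p, g p ∂(nuIcc.prod nuIcc) := by
  rw [← map_pair hij, integral_map]
  · exact ((measurable_pi_apply i).prodMk (measurable_pi_apply j)).aemeasurable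
  · exact hg.aestronglyMeasurable

lemma integrable_bdd {α : Type*} [MeasurableSpace α] {μ : Measure α} [IsFiniteMeasure μ]
    {f : α → ℝ} (hm : Measurable f) {C : ℝ} (hC : ∀ x, |f x| ≤ C) : Integrable f μ :=
  (integrable_const C).mono' hm.aestronglyMeasurable
    (Filter.Eventually.of_forall fun x => by simpa [Real.norm_eq_abs] using hC x)

lemma negMulLog_le_one {p : ℝ} (h0 : 0 ≤ p) (h1 : p ≤ 1) : Real.negMulLog p ≤ 1 := by
  rcases eq_or_lt_of_le h0 with h | h
  · simp [← h, Real.negMulLog_zero]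
  · have hlog : Real.log p⁻¹ ≤ p⁻¹ - 1 := Real.log_le_sub_one_of_pos (by positivity)
    have : Real.negMulLog p = p * Real.log p⁻¹ := by
      rw [Real.log_inv, Real.negMulLog]; ring
    rw [this]
    calc p * Real.log p⁻¹ ≤ p * (p⁻¹ - 1) := by
          exact mul_le_mul_of_nonneg_left hlog h0
      _ = 1 - p := by field_simp
      _ ≤ 1 := by linarith

lemma bernoulliEntropy_abs_le {p : ℝ} (h0 : 0 ≤ p) (h1 : p ≤ 1) :
    |bernoulliEntropy p| ≤ 2 := by
  have n1 := Real.negMulLog_nonneg h0 h1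
  have n2 := Real.negMulLog_nonneg (by linarith : (0:ℝ) ≤ 1 - p) (by linarith)
  have u1 := negMulLog_le_one h0 h1
  have u2 := negMulLog_le_one (by linarith : (0:ℝ) ≤ 1 - p) (by linarith)
  rw [bernoulliEntropy, abs_le]
  constructor <;> linarith

/-- **The variational problem for motif models (key step of Proposition 4).** With a
finite set of motifs `m` (indexed by `ι`) with `e_m ≥ 1` edges and values `a_m > 0`
whenever `e_m > 1`, the supremum over graphons `h : [0,1]² → [0,1]` of
`∑_m a_m t(m,h) + H(h)` equals `max_{s∈[0,1]} [∑_m a_m s^{e_m} + H(s)]`, and it is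
attained by the constant graphon `h ≡ s*` for any maximizer `s*`. -/
theorem stmt_11 (ι : Type) [Fintype ι] (nm : ι → ℕ)
    (edges : (i : ι) → Finset (Fin (nm i) × Fin (nm i)))
    (hloop : ∀ i, ∀ e ∈ edges i, e.1 ≠ e.2)
    (hne : ∀ i, 1 ≤ (edges i).card)
    (a : ι → ℝ) (hpos : ∀ i, 1 < (edges i).card → 0 < a i) :
    (∃ s ∈ Set.Icc (0 : ℝ) 1,
      ∀ s' ∈ Set.Icc (0 : ℝ) 1,
        (∑ i, a i * s' ^ (edges i).card) + bernoulliEntropy s' ≤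
          (∑ i, a i * s ^ (edges i).card) + bernoulliEntropy s) ∧
    (∀ s ∈ Set.Icc (0 : ℝ) 1,
      (∀ s' ∈ Set.Icc (0 : ℝ) 1,
        (∑ i, a i * s' ^ (edges i).card) + bernoulliEntropy s' ≤
          (∑ i, a i * s ^ (edges i).card) + bernoulliEntropy s) →
      IsGreatest
        {r : ℝ | ∃ h : ℝ → ℝ → ℝ, Measurable (Function.uncurry h) ∧
          (∀ x y, h x y ∈ Set.Icc (0 : ℝ) 1) ∧
          r = (∑ i, a i * homDensity (nm i) (edges i) h) + graphonEntropy h}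
        ((∑ i, a i * s ^ (edges i).card) + bernoulliEntropy s)) := by
  classical
  have hHcont : Continuous bernoulliEntropy := by
    unfold bernoulliEntropy
    exact Real.continuous_negMulLog.add
      (Real.continuous_negMulLog.comp (continuous_const.sub continuous_id))
  constructor
  · -- existence of a maximizer
    have hcont : Continuous fun s : ℝ =>
        (∑ i, a i * s ^ (edges i).card) + bernoulliEntropy s :=
      (continuous_finset_sum _ fun i _ => continuous_const.mul (continuous_pow _)).add hHcont
    obtain ⟨s, hs, hmax⟩ := isCompact_Icc.exists_isMaxOn (Set.nonempty_Icc.2 zero_le_one)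
      hcont.continuousOn
    exact ⟨s, hs, fun s' hs' => hmax hs'⟩
  · -- the value at any maximizer is the greatest value of the functional
    intro s hsIcc hmax
    set M : ℝ := (∑ i, a i * s ^ (edges i).card) + bernoulliEntropy s with hM
    constructor
    · -- attained by the constant graphon
      refine ⟨fun _ _ => s, measurable_const, fun _ _ => hsIcc, ?_⟩
      have h1 : ∀ i, homDensity (nm i) (edges i) (fun _ _ => s) = s ^ (edges i).card := by
        intro i
        rw [homDensity]
        simp only [Finset.prod_const]
        rw [show (∫ x in unitCube (nm i), s ^ (edges i).card)
            = ∫ _x, s ^ (edges i).card ∂((volume : Measure (Fin (nm i) → ℝ)).restrict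
              (unitCube (nm i))) from rfl, cube_eq, integral_const, probReal_univ]
        simp
      have h2 : graphonEntropy (fun _ _ => s) = bernoulliEntropy s := by
        rw [graphonEntropy]
        rw [show (∫ p in unitSquare, bernoulliEntropy s)
            = ∫ _p, bernoulliEntropy s ∂((volume : Measure (ℝ × ℝ)).restrict unitSquare)
            from rfl, square_eq, integral_const, probReal_univ]
        simp
      rw [h2, hM]
      congr 1
      exact Finset.sum_congr rfl fun i _ => by rw [h1 i]
    · -- upper bound
      rintro r ⟨h, hm, hb, rfl⟩
      set μ2 : Measure (ℝ × ℝ) := nuIcc.prod nuIcc with hμ2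
      have hmeas2 : Measurable fun p : ℝ × ℝ => h p.1 p.2 := hm
      have hmeasy : ∀ (n : ℕ) (e : Fin n × Fin n),
          Measurable fun x : Fin n → ℝ => h (x e.1) (x e.2) := by
        intro n e
        have heq : (fun x : Fin n → ℝ => h (x e.1) (x e.2))
            = Function.uncurry h ∘ (fun x => (x e.1, x e.2)) := rfl
        rw [heq]
        exact hm.comp ((measurable_pi_apply e.1).prodMk (measurable_pi_apply e.2))
      -- the candidate integrals over the square
      set I : ι → ℝ := fun i => ∫ p, (h p.1 p.2) ^ (edges i).card ∂μ2 with hI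
      have habs : ∀ (x y : ℝ) (k : ℕ), |h x y ^ k| ≤ 1 := by
        intro x y k
        rw [abs_pow]
        refine pow_le_one₀ (abs_nonneg _) ?_
        rw [abs_le]
        exact ⟨by linarith [(hb x y).1], (hb x y).2⟩
      -- marginalization
      have marg : ∀ (n : ℕ) (i j : Fin n), i ≠ j → ∀ k : ℕ,
          ∫ x, (h (x i) (x j)) ^ k ∂(Measure.pi fun _ : Fin n => nuIcc)
            = ∫ p, (h p.1 p.2) ^ k ∂μ2 := by
        intro n i j hij k
        exact integral_coord_pair hij (hmeas2.pow_const k)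
      -- each density is at most the corresponding integral
      have key : ∀ i, a i * homDensity (nm i) (edges i) h ≤ a i * I i := by
        intro i
        set n := nm i
        set E := edges i with hE
        set c := E.card with hc
        have hc1 : 1 ≤ c := hne i
        have hcpos : (0:ℝ) < c := by exact_mod_cast hc1
        have hd : homDensity n E h
            = ∫ x, ∏ e ∈ E, h (x e.1) (x e.2) ∂(Measure.pi fun _ : Fin n => nuIcc) := by
          rw [homDensity, show (∫ x in unitCube n, ∏ e ∈ E, h (x e.1) (x e.2))
            = ∫ x, ∏ e ∈ E, h (x e.1) (x e.2) ∂((volume : Measure (Fin n → ℝ)).restrict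
              (unitCube n)) from rfl, cube_eq]
        have hIi : I i = ∫ p, (h p.1 p.2) ^ c ∂μ2 := by
          simp only [hI, hc, hE]
        rcases eq_or_lt_of_le hc1 with hceq | hclt
        · -- exactly one edge : equality
          obtain ⟨e, he⟩ := Finset.card_eq_one.1 hceq.symm
          have hmem : e ∈ E := by rw [he]; exact Finset.mem_singleton_self e
          have heq : homDensity n E h = I i := by
            rw [hd, he]
            simp only [Finset.prod_singleton]
            have hm1 := marg n e.1 e.2 (hloop i e hmem) 1
            simp only [pow_one] at hm1
            rw [hm1, hIi, ← hceq]
            simp only [pow_one]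
          rw [heq]
        · -- more than one edge : AM-GM
          have ha : 0 ≤ a i := (hpos i hclt).le
          refine mul_le_mul_of_nonneg_left ?_ ha
          have amgm : ∀ x : Fin n → ℝ, ∏ e ∈ E, h (x e.1) (x e.2)
              ≤ ∑ e ∈ E, (1 / (c:ℝ)) * (h (x e.1) (x e.2)) ^ c := by
            intro x
            have hz : ∀ e ∈ E, (0:ℝ) ≤ (h (x e.1) (x e.2)) ^ c :=
              fun e _ => pow_nonneg (hb _ _).1 c
            have hw : ∀ e ∈ E, (0:ℝ) ≤ 1 / (c:ℝ) := fun _ _ => by positivity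
            have hw1 : ∑ _e ∈ E, (1 / (c:ℝ)) = 1 := by
              rw [Finset.sum_const, ← hc, nsmul_eq_mul]
              field_simp
            have := Real.geom_mean_le_arith_mean_weighted E (fun _ => 1 / (c:ℝ))
              (fun e => (h (x e.1) (x e.2)) ^ c) hw hw1 hz
            beta_reduce at this
            refine le_trans (le_of_eq ?_) this
            refine (Finset.prod_congr rfl fun e _ => ?_).symm
            have h0 : (0:ℝ) ≤ h (x e.1) (x e.2) := (hb _ _).1
            rw [← Real.rpow_natCast (h (x e.1) (x e.2)) c, ← Real.rpow_mul h0]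
            rw [mul_one_div_cancel (ne_of_gt hcpos), Real.rpow_one]
          have int1 : Integrable (fun x : Fin n → ℝ => ∏ e ∈ E, h (x e.1) (x e.2))
              (Measure.pi fun _ : Fin n => nuIcc) := by
            refine integrable_bdd (Finset.measurable_prod _ fun e _ => hmeasy n e) (C := 1) ?_
            intro x
            rw [Finset.abs_prod]
            refine Finset.prod_le_one (fun e _ => abs_nonneg _) fun e _ => ?_
            simpa using habs (x e.1) (x e.2) 1
          have intterm : ∀ e ∈ E, Integrable
              (fun x : Fin n → ℝ => (1 / (c:ℝ)) * (h (x e.1) (x e.2)) ^ c)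
              (Measure.pi fun _ : Fin n => nuIcc) := by
            intro e _
            refine integrable_bdd (((hmeasy n e).pow_const c).const_mul _) (C := 1 / (c:ℝ)) ?_
            intro x
            rw [abs_mul, abs_of_nonneg (by positivity : (0:ℝ) ≤ 1 / (c:ℝ))]
            calc (1 / (c:ℝ)) * |h (x e.1) (x e.2) ^ c| ≤ (1 / (c:ℝ)) * 1 :=
                  mul_le_mul_of_nonneg_left (habs _ _ _) (by positivity)
              _ = 1 / (c:ℝ) := mul_one _
          have int2 : Integrable (fun x : Fin n → ℝ =>
              ∑ e ∈ E, (1 / (c:ℝ)) * (h (x e.1) (x e.2)) ^ c)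
              (Measure.pi fun _ : Fin n => nuIcc) := integrable_finset_sum E intterm
          rw [hd]
          calc (∫ x, ∏ e ∈ E, h (x e.1) (x e.2) ∂(Measure.pi fun _ : Fin n => nuIcc))
              ≤ ∫ x, ∑ e ∈ E, (1 / (c:ℝ)) * (h (x e.1) (x e.2)) ^ c
                  ∂(Measure.pi fun _ : Fin n => nuIcc) := integral_mono int1 int2 amgm
            _ = ∑ e ∈ E, ∫ x, (1 / (c:ℝ)) * (h (x e.1) (x e.2)) ^ c
                  ∂(Measure.pi fun _ : Fin n => nuIcc) := integral_finset_sum E intterm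
            _ = ∑ e ∈ E, (1 / (c:ℝ)) * ∫ x, (h (x e.1) (x e.2)) ^ c
                  ∂(Measure.pi fun _ : Fin n => nuIcc) := by
                refine Finset.sum_congr rfl fun e _ => ?_
                exact integral_const_mul _ _
            _ = ∑ _e ∈ E, (1 / (c:ℝ)) * ∫ p, (h p.1 p.2) ^ c ∂μ2 := by
                refine Finset.sum_congr rfl fun e he => ?_
                rw [marg n e.1 e.2 (hloop i e he) c]
            _ = I i := by
                rw [Finset.sum_const, ← hc, nsmul_eq_mul, hIi]
                field_simp
      -- assemble
      have hGE : graphonEntropy h = ∫ p, bernoulliEntropy (h p.1 p.2) ∂μ2 := by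
        rw [graphonEntropy, show (∫ p in unitSquare, bernoulliEntropy (h p.1 p.2))
          = ∫ p, bernoulliEntropy (h p.1 p.2) ∂((volume : Measure (ℝ × ℝ)).restrict unitSquare)
          from rfl, square_eq]
      have intHe : Integrable (fun p : ℝ × ℝ => bernoulliEntropy (h p.1 p.2)) μ2 := by
        refine integrable_bdd (hHcont.measurable.comp hmeas2) (C := 2) fun p => ?_
        exact bernoulliEntropy_abs_le (hb p.1 p.2).1 (hb p.1 p.2).2
      have intgi : ∀ i, Integrable (fun p : ℝ × ℝ => a i * (h p.1 p.2) ^ (edges i).card) μ2 := by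
        intro i
        refine integrable_bdd ((hmeas2.pow_const _).const_mul _) (C := |a i|) fun p => ?_
        rw [abs_mul]
        calc |a i| * |h p.1 p.2 ^ (edges i).card| ≤ |a i| * 1 :=
              mul_le_mul_of_nonneg_left (habs _ _ _) (abs_nonneg _)
          _ = |a i| := mul_one _
      have intsum : Integrable (fun p : ℝ × ℝ =>
          ∑ i, a i * (h p.1 p.2) ^ (edges i).card) μ2 :=
        integrable_finset_sum _ fun i _ => intgi i
      have split : ∫ p, ((∑ i, a i * (h p.1 p.2) ^ (edges i).card)
            + bernoulliEntropy (h p.1 p.2)) ∂μ2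
          = (∑ i, a i * I i) + ∫ p, bernoulliEntropy (h p.1 p.2) ∂μ2 := by
        rw [integral_add intsum intHe, integral_finset_sum _ fun i _ => intgi i]
        congr 1
        refine Finset.sum_congr rfl fun i _ => ?_
        rw [integral_const_mul]
      have bound : ∫ p, ((∑ i, a i * (h p.1 p.2) ^ (edges i).card)
            + bernoulliEntropy (h p.1 p.2)) ∂μ2 ≤ M := by
        have : ∫ (_p : ℝ × ℝ), M ∂μ2 = M := by
          rw [integral_const, probReal_univ]; simp
        rw [← this]
        refine integral_mono (intsum.add intHe) (integrable_const M) fun p => ?_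
        exact hmax (h p.1 p.2) (hb p.1 p.2)
      have sum_le : ∑ i, a i * homDensity (nm i) (edges i) h ≤ ∑ i, a i * I i :=
        Finset.sum_le_sum fun i _ => key i
      rw [hGE]
      linarith [split, bound, sum_le]
end
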